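/- For all x > 0, cosh(x)·sinh²(x) + x·sinh(x) − 2x²·cosh(x) > 0. -/
import Mathlib

open Real

private lemma aux_mono {f : ℝ → ℝ} (hf : Differentiable ℝ f)
    (hf' : ∀ y, 0 ≤ y → 0 ≤ deriv f y) {x : ℝ} (hx : 0 ≤ x) : f 0 ≤ f x := by
  rcases eq_or_lt_of_le hx with h | h
  · rw [← h]
  · have hm : MonotoneOn f (Set.Ici (0:ℝ)) := by
      apply monotoneOn_of_deriv_nonneg (convex_Ici 0) hf.continuous.continuousOn
        (fun y _ => (hf y).differentiableWithinAt)
      intro y hy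
      rw [interior_Ici] at hy
      exact hf' y (le_of_lt hy)
    exact hm (Set.self_mem_Ici) (Set.mem_Ici.2 hx) hx

private lemma lemA {x : ℝ} (hx : 0 ≤ x) : Real.sinh x ≤ x * Real.cosh x := by
  have h := aux_mono (f := fun y => y * Real.cosh y - Real.sinh y)
    (by fun_prop) ?_ hx
  · simpa using h
  · intro y hy
    have hd : HasDerivAt (fun y => y * Real.cosh y - Real.sinh y)
        (1 * Real.cosh y + y * Real.sinh y - Real.cosh y) y :=
      ((hasDerivAt_id y).mul (Real.hasDerivAt_cosh y)).sub (Real.hasDerivAt_sinh y)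
    rw [hd.deriv]
    have : 0 ≤ y * Real.sinh y := mul_nonneg hy (by simpa using hy)
    nlinarith

private lemma lemB {x : ℝ} (hx : 0 ≤ x) : 1 + x ^ 2 / 2 ≤ Real.cosh x := by
  have h := aux_mono (f := fun y => Real.cosh y - (1 + y ^ 2 / 2)) (by fun_prop) ?_ hx
  · simpa using h
  · intro y hy
    have hd : HasDerivAt (fun y => Real.cosh y - (1 + y ^ 2 / 2))
        (Real.sinh y - (0 + 2 * y ^ 1 / 2)) y :=
      (Real.hasDerivAt_cosh y).sub ((hasDerivAt_const y 1).add
        (((hasDerivAt_pow 2 y)).div_const 2))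
    rw [hd.deriv]
    have : y ≤ Real.sinh y := by simpa using hy
    simp only [pow_one]
    nlinarith

private lemma lemC {x : ℝ} (hx : 0 ≤ x) : x + x ^ 3 / 6 ≤ Real.sinh x := by
  have h := aux_mono (f := fun y => Real.sinh y - (y + y ^ 3 / 6)) (by fun_prop) ?_ hx
  · simpa using h
  · intro y hy
    have hd : HasDerivAt (fun y => Real.sinh y - (y + y ^ 3 / 6))
        (Real.cosh y - (1 + 3 * y ^ 2 / 6)) y :=
      (Real.hasDerivAt_sinh y).sub ((hasDerivAt_id y).add
        (((hasDerivAt_pow 3 y)).div_const 6))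
    rw [hd.deriv]
    have := lemB hy
    nlinarith

private lemma lemD {x : ℝ} (hx : 0 ≤ x) : (x - x ^ 3 / 3) * Real.cosh x ≤ Real.sinh x := by
  have h := aux_mono (f := fun y => Real.sinh y - (y - y ^ 3 / 3) * Real.cosh y)
    (by fun_prop) ?_ hx
  · simpa using h
  · intro y hy
    have hd : HasDerivAt (fun y => Real.sinh y - (y - y ^ 3 / 3) * Real.cosh y)
        (Real.cosh y - ((1 - 3 * y ^ 2 / 3) * Real.cosh y + (y - y ^ 3 / 3) * Real.sinh y)) y :=
      (Real.hasDerivAt_sinh y).sub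
        ((((hasDerivAt_id y).sub ((hasDerivAt_pow 3 y).div_const 3)).mul
          (Real.hasDerivAt_cosh y)))
    rw [hd.deriv]
    have hA := lemA hy
    have hs : 0 ≤ Real.sinh y := by simpa using hy
    have hc : (1:ℝ) ≤ Real.cosh y := Real.one_le_cosh y
    -- deriv = y^2 cosh y - (y - y^3/3) sinh y ≥ 0
    rcases le_or_gt (y - y ^ 3 / 3) 0 with h1 | h1
    · nlinarith
    · nlinarith [mul_le_mul_of_nonneg_left hA (le_of_lt h1),
        mul_nonneg (by positivity : (0:ℝ) ≤ y ^ 4) (Real.cosh_pos y).le]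

theorem stmt_4 (x : ℝ) (hx : 0 < x) :
    0 < Real.cosh x * Real.sinh x ^ 2 + x * Real.sinh x - 2 * x ^ 2 * Real.cosh x := by
  have hx' := hx.le
  have hC := lemC hx'
  have hD := lemD hx'
  have hc : (1:ℝ) ≤ Real.cosh x := Real.one_le_cosh x
  have hs : 0 ≤ x + x ^ 3 / 6 := by positivity
  have h6 : 0 < x ^ 6 := by positivity
  nlinarith [sq_nonneg (Real.sinh x), mul_le_mul_of_nonneg_left
    (mul_self_le_mul_self hs hC) (le_trans zero_le_one hc), sq_nonneg x, sq_nonneg (x^3)]
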